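/- Upper bound on the spectral gap via exponential integrability: Let J(dx,dy) = π(dx) q(x,dy) be symmetric, K = 0, and suppose φ ≥ 0 satisfies 0 < δ₂'(φ) := ess-sup_π ∫ |φ(x) − φ(y)|² q(x,dy) < ∞. Then λ₁ ≤ (δ₂'(φ)/4) · sup{ε² : ε ≥ 0, π(e^{εφ}) < ∞}. In particular, if π(e^{εφ}) = ∞ for all ε > 0, then λ₁ = 0. -/

import Mathlib

open MeasureTheory ProbabilityTheory Set ENNReal

lemma exp_diff_sq_le (A B : ℝ) :
    (Real.exp A - Real.exp B) ^ 2 ≤ (A - B) ^ 2 * (Real.exp (2*A) + Real.exp (2*B)) := by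
  have key : ∀ X Y : ℝ, Y ≤ X → (Real.exp X - Real.exp Y) ^ 2 ≤ (X - Y) ^ 2 * (Real.exp (2*X) + Real.exp (2*Y)) := by
    intro X Y h
    have h1 : Real.exp X - Real.exp Y ≤ (X - Y) * Real.exp X := by
      have h2 : Real.exp (Y - X) ≥ 1 + (Y - X) := by
        have := Real.add_one_le_exp (Y - X); linarith
      have h3 : Real.exp (Y - X) = Real.exp Y / Real.exp X := Real.exp_sub Y X
      have h4 := Real.exp_pos X
      rw [h3] at h2
      have h5 : (1 + (Y - X)) * Real.exp X ≤ Real.exp Y := (le_div_iff₀ h4).1 h2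
      nlinarith
    have h0 : 0 ≤ Real.exp X - Real.exp Y := by
      have := Real.exp_le_exp.2 h; linarith
    have h6 : Real.exp X ^ 2 = Real.exp (2*X) := by
      rw [sq, ← Real.exp_add]; ring_nf
    nlinarith [sq_nonneg (X - Y), Real.exp_pos (2*Y), Real.exp_pos X]
  rcases le_total B A with h | h
  · exact key A B h
  · have := key B A h
    calc (Real.exp A - Real.exp B) ^ 2 = (Real.exp B - Real.exp A) ^ 2 := by ring
      _ ≤ (B - A) ^ 2 * (Real.exp (2*B) + Real.exp (2*A)) := this
      _ = (A - B) ^ 2 * (Real.exp (2*A) + Real.exp (2*B)) := by ring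

lemma min_sub_min_sq_le (a b n : ℝ) : (min a n - min b n) ^ 2 ≤ (a - b) ^ 2 := by
  have : |min a n - min b n| ≤ |a - b| := by
    rcases le_total a n with h1 | h1 <;> rcases le_total b n with h2 | h2 <;>
      simp [min_eq_left, min_eq_right, h1, h2, abs_le] <;>
      constructor <;> nlinarith [le_abs_self (a-b), neg_abs_le (a-b)]
  calc (min a n - min b n) ^ 2 = |min a n - min b n| ^ 2 := (sq_abs _).symm
    _ ≤ |a - b| ^ 2 := by nlinarith [abs_nonneg (min a n - min b n), abs_nonneg (a-b)]
    _ = (a - b) ^ 2 := sq_abs _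

lemma pointwise_bound (ε n a b : ℝ) :
    (Real.exp (ε * min a n / 2) - Real.exp (ε * min b n / 2)) ^ 2 ≤
      ε^2/4 * ((a-b)^2 * (Real.exp (ε * min a n / 2)^2 + Real.exp (ε * min b n / 2)^2)) := by
  set A := ε * min a n / 2 with hA
  set B := ε * min b n / 2 with hB
  have h1 := exp_diff_sq_le A B
  have h2 := min_sub_min_sq_le a b n
  have e1 : Real.exp (2*A) = Real.exp A ^ 2 := by rw [sq, ← Real.exp_add]; ring_nf
  have e2 : Real.exp (2*B) = Real.exp B ^ 2 := by rw [sq, ← Real.exp_add]; ring_nf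
  have e3 : (A - B)^2 = ε^2/4 * (min a n - min b n)^2 := by rw [hA, hB]; ring
  rw [e1, e2, e3] at h1
  have hpos : 0 ≤ Real.exp A ^ 2 + Real.exp B ^ 2 := by positivity
  nlinarith [mul_le_mul_of_nonneg_right h2 hpos, sq_nonneg ε]

set_option maxHeartbeats 1600000 in
lemma key_lemma {E : Type*} [MeasurableSpace E] (π : Measure E) [IsProbabilityMeasure π]
    (q : Kernel E E) [IsSFiniteKernel q]
    (hsym : Measure.map Prod.swap (π.compProd q) = π.compProd q)
    (φ : E → ℝ) (hφ : Measurable φ) (hφnn : ∀ x, 0 ≤ φ x)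
    (δ : ℝ) (hδpos : 0 < δ)
    (hδ : ∀ᵐ x ∂π, (∫⁻ y, ENNReal.ofReal ((φ x - φ y) ^ 2) ∂(q x)) ≤ ENNReal.ofReal δ)
    (lam1 : ℝ≥0∞)
    (hlam : ∀ g : E → ℝ, Measurable g → (∫ x, g x ∂π) = 0 → (∫ x, (g x)^2 ∂π) = 1 →
      lam1 ≤ (1 / 2 : ℝ≥0∞) * ∫⁻ p, ENNReal.ofReal ((g p.1 - g p.2) ^ 2) ∂(π.compProd q))
    (ε : ℝ) (hε : 0 ≤ ε)
    (hlt : ENNReal.ofReal (δ/4) * ENNReal.ofReal (ε^2) < lam1) :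
    Integrable (fun y => Real.exp (ε * φ y)) π := by
  rcases hε.lt_or_eq with hε | hε
  swap
  · simp only [← hε, zero_mul, Real.exp_zero]
    exact integrable_const 1
  -- the constant c
  obtain ⟨c, hc_def⟩ : ∃ c : ℝ, c = δ * ε^2 / 4 := ⟨_, rfl⟩
  have hc : 0 < c := by rw [hc_def]; positivity
  have hofc : ENNReal.ofReal (δ/4) * ENNReal.ofReal (ε^2) = ENNReal.ofReal c := by
    rw [← ENNReal.ofReal_mul (by positivity)]; congr 1; rw [hc_def]; ring
  rw [hofc] at hlt
  -- choose λ₀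
  obtain ⟨lam0, hclam0, hlam0le⟩ : ∃ lam0 : ℝ, c < lam0 ∧ ENNReal.ofReal lam0 ≤ lam1 := by
    by_cases htop : lam1 = ⊤
    · exact ⟨c + 1, by linarith, by simp [htop]⟩
    · refine ⟨lam1.toReal, ?_, le_of_eq (ENNReal.ofReal_toReal htop)⟩
      have := hlt.trans_le (le_of_eq (ENNReal.ofReal_toReal htop).symm)
      exact (ENNReal.ofReal_lt_ofReal_iff_of_nonneg hc.le).1 this
  have hlam0pos : 0 < lam0 := hc.trans hclam0
  -- the functions f n
  set f : ℕ → E → ℝ := fun n x => Real.exp (ε * min (φ x) n / 2) with hf_def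
  have hfm : ∀ n, Measurable (f n) := fun n =>
    (((hφ.min measurable_const).const_mul ε).div_const 2).exp
  have hminnn : ∀ (n : ℕ) (x : E), 0 ≤ min (φ x) n :=
    fun n x => le_min (hφnn x) (Nat.cast_nonneg n)
  have hf1 : ∀ n x, 1 ≤ f n x := fun n x =>
    Real.one_le_exp (div_nonneg (mul_nonneg hε.le (hminnn n x)) (by norm_num))
  have hfub : ∀ n x, f n x ≤ Real.exp (ε * n / 2) := fun n x =>
    Real.exp_le_exp.2 (by
      have := min_le_right (φ x) (n:ℝ)
      have : ε * min (φ x) n ≤ ε * n := mul_le_mul_of_nonneg_left this hε.le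
      linarith)
  have hfint : ∀ n, Integrable (f n) π := by
    intro n
    refine (integrable_const (Real.exp (ε * n / 2))).mono' (hfm n).aestronglyMeasurable ?_
    filter_upwards with x
    rw [Real.norm_eq_abs, abs_of_pos (Real.exp_pos _)]
    exact hfub n x
  have hf2int : ∀ n, Integrable (fun x => (f n x)^2) π := by
    intro n
    refine (integrable_const (Real.exp (ε * n / 2) ^ 2)).mono'
      (((hfm n).pow_const 2).aestronglyMeasurable) ?_
    filter_upwards with x
    rw [Real.norm_eq_abs, abs_of_pos (by positivity)]
    have h1 := hf1 n x
    have h2 := hfub n x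
    nlinarith
  obtain ⟨a, ha_def⟩ : ∃ a : ℕ → ℝ, ∀ n, a n = ∫ x, (f n x)^2 ∂π := ⟨_, fun _ => rfl⟩
  obtain ⟨m, hm_def⟩ : ∃ m : ℕ → ℝ, ∀ n, m n = ∫ x, f n x ∂π := ⟨_, fun _ => rfl⟩
  have ha1 : ∀ n, 1 ≤ a n := by
    intro n
    calc (1:ℝ) = ∫ _, (1:ℝ) ∂π := by simp
      _ ≤ a n := by
          rw [ha_def]
          exact integral_mono (integrable_const 1) (hf2int n)
            (fun x => by have := hf1 n x; nlinarith)
  have hm0 : ∀ n, 0 ≤ m n := fun n => (hm_def n) ▸ integral_nonneg (fun x => le_trans zero_le_one (hf1 n x))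
  -- Dirichlet form bound
  have hφ2meas : Measurable fun pp : E × E => ENNReal.ofReal ((φ pp.1 - φ pp.2)^2) :=
    (((hφ.comp measurable_fst).sub (hφ.comp measurable_snd)).pow_const 2).ennreal_ofReal
  have hG1 : ∀ n, Measurable fun pp : E × E => ENNReal.ofReal ((f n pp.1)^2) :=
    fun n => (((hfm n).comp measurable_fst).pow_const 2).ennreal_ofReal
  have hG2 : ∀ n, Measurable fun pp : E × E => ENNReal.ofReal ((f n pp.2)^2) :=
    fun n => (((hfm n).comp measurable_snd).pow_const 2).ennreal_ofReal
  have hT : ∀ n, ∫⁻ pp : E × E, ENNReal.ofReal ((φ pp.1 - φ pp.2)^2) *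
      ENNReal.ofReal ((f n pp.1)^2) ∂(π.compProd q) ≤
      ENNReal.ofReal δ * ENNReal.ofReal (a n) := by
    intro n
    rw [Measure.lintegral_compProd (by exact (hφ2meas).mul (hG1 n))]
    have step1 : ∀ x, ∫⁻ y, ENNReal.ofReal ((φ x - φ y)^2) * ENNReal.ofReal ((f n x)^2) ∂(q x)
        = (∫⁻ y, ENNReal.ofReal ((φ x - φ y)^2) ∂(q x)) * ENNReal.ofReal ((f n x)^2) :=
      fun x => lintegral_mul_const _ (((measurable_const.sub hφ).pow_const 2).ennreal_ofReal)
    calc ∫⁻ x, ∫⁻ y, ENNReal.ofReal ((φ x - φ y)^2) * ENNReal.ofReal ((f n x)^2) ∂(q x) ∂π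
        = ∫⁻ x, (∫⁻ y, ENNReal.ofReal ((φ x - φ y)^2) ∂(q x)) * ENNReal.ofReal ((f n x)^2) ∂π := by
          simp_rw [step1]
      _ ≤ ∫⁻ x, ENNReal.ofReal δ * ENNReal.ofReal ((f n x)^2) ∂π := by
          apply lintegral_mono_ae
          filter_upwards [hδ] with x hx
          exact mul_le_mul_left hx _
      _ = ENNReal.ofReal δ * ∫⁻ x, ENNReal.ofReal ((f n x)^2) ∂π :=
          lintegral_const_mul _ (((hfm n).pow_const 2).ennreal_ofReal)
      _ = ENNReal.ofReal δ * ENNReal.ofReal (a n) := by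
          congr 1
          rw [ha_def n]
          exact (ofReal_integral_eq_lintegral_ofReal (hf2int n)
            (Filter.Eventually.of_forall fun x => by positivity)).symm
  have hT2 : ∀ n, ∫⁻ pp : E × E, ENNReal.ofReal ((φ pp.1 - φ pp.2)^2) *
      ENNReal.ofReal ((f n pp.2)^2) ∂(π.compProd q) =
      ∫⁻ pp : E × E, ENNReal.ofReal ((φ pp.1 - φ pp.2)^2) *
      ENNReal.ofReal ((f n pp.1)^2) ∂(π.compProd q) := by
    intro n
    conv_lhs => rw [← hsym]
    rw [lintegral_map (by exact (hφ2meas).mul (hG2 n)) measurable_swap]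
    apply lintegral_congr
    intro pp
    simp only [Prod.fst_swap, Prod.snd_swap]
    rw [show (φ pp.2 - φ pp.1)^2 = (φ pp.1 - φ pp.2)^2 by ring]
  have hhalf : (1 / 2 : ℝ≥0∞) = ENNReal.ofReal (1/2) := by
    rw [ENNReal.ofReal_div_of_pos (by norm_num), ENNReal.ofReal_one, ENNReal.ofReal_ofNat]
  have hD : ∀ n, (1 / 2 : ℝ≥0∞) *
      (∫⁻ p, ENNReal.ofReal ((f n p.1 - f n p.2) ^ 2) ∂(π.compProd q)) ≤
      ENNReal.ofReal (c * a n) := by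
    intro n
    have han : (0:ℝ) ≤ a n := le_trans zero_le_one (ha1 n)
    have hpt : ∀ pp : E × E, ENNReal.ofReal ((f n pp.1 - f n pp.2)^2) ≤
        ENNReal.ofReal (ε^2/4) * (ENNReal.ofReal ((φ pp.1 - φ pp.2)^2) *
          (ENNReal.ofReal ((f n pp.1)^2) + ENNReal.ofReal ((f n pp.2)^2))) := by
      intro pp
      have h := pointwise_bound ε n (φ pp.1) (φ pp.2)
      calc ENNReal.ofReal ((f n pp.1 - f n pp.2)^2)
          ≤ ENNReal.ofReal (ε^2/4 * ((φ pp.1 - φ pp.2)^2 * ((f n pp.1)^2 + (f n pp.2)^2))) :=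
            ENNReal.ofReal_le_ofReal h
        _ = _ := by
            rw [ENNReal.ofReal_mul (by positivity), ENNReal.ofReal_mul (by positivity),
              ENNReal.ofReal_add (by positivity) (by positivity)]
    calc (1 / 2 : ℝ≥0∞) * ∫⁻ pp, ENNReal.ofReal ((f n pp.1 - f n pp.2)^2) ∂(π.compProd q)
        ≤ (1 / 2 : ℝ≥0∞) * ∫⁻ pp, ENNReal.ofReal (ε^2/4) *
            (ENNReal.ofReal ((φ pp.1 - φ pp.2)^2) *
            (ENNReal.ofReal ((f n pp.1)^2) + ENNReal.ofReal ((f n pp.2)^2))) ∂(π.compProd q) :=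
          mul_le_mul_right (lintegral_mono hpt) _
      _ = (1 / 2 : ℝ≥0∞) * (ENNReal.ofReal (ε^2/4) *
            ((∫⁻ pp : E × E, ENNReal.ofReal ((φ pp.1 - φ pp.2)^2) *
              ENNReal.ofReal ((f n pp.1)^2) ∂(π.compProd q)) +
             ∫⁻ pp : E × E, ENNReal.ofReal ((φ pp.1 - φ pp.2)^2) *
              ENNReal.ofReal ((f n pp.2)^2) ∂(π.compProd q))) := by
          rw [lintegral_const_mul _ (by exact (hφ2meas).mul ((hG1 n).add (hG2 n)))]
          congr 1
          simp_rw [mul_add]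
          rw [lintegral_add_left (by exact (hφ2meas).mul (hG1 n)), mul_add]
      _ ≤ (1 / 2 : ℝ≥0∞) * (ENNReal.ofReal (ε^2/4) *
            (ENNReal.ofReal δ * ENNReal.ofReal (a n) +
             ENNReal.ofReal δ * ENNReal.ofReal (a n))) := by
          apply mul_le_mul_right
          apply mul_le_mul_right
          exact add_le_add (hT n) ((le_of_eq (hT2 n)).trans (hT n))
      _ = ENNReal.ofReal (c * a n) := by
          rw [← ENNReal.ofReal_mul hδpos.le,
            ← ENNReal.ofReal_add (mul_nonneg hδpos.le han) (mul_nonneg hδpos.le han),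
            ← ENNReal.ofReal_mul (by positivity), hhalf,
            ← ENNReal.ofReal_mul (by norm_num)]
          congr 1
          rw [hc_def]; ring
  -- variance inequality
  have hFmeas : ∀ n, Measurable fun pp : E × E => ENNReal.ofReal ((f n pp.1 - f n pp.2)^2) :=
    fun n => ((((hfm n).comp measurable_fst).sub ((hfm n).comp measurable_snd)).pow_const 2).ennreal_ofReal
  have hvar : ∀ n, lam0 * (a n - (m n)^2) ≤ c * a n := by
    intro n
    by_cases hv0 : a n - (m n)^2 ≤ 0
    · nlinarith [ha1 n]
    push_neg at hv0
    obtain ⟨v, hv_def⟩ : ∃ v : ℝ, v = a n - (m n)^2 := ⟨_, rfl⟩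
    have hvpos : 0 < v := hv_def ▸ hv0
    obtain ⟨g, hg_def⟩ : ∃ g : E → ℝ, g = fun x => (f n x - m n) / Real.sqrt v := ⟨_, rfl⟩
    have hgm : Measurable g := by
      rw [hg_def]; exact ((hfm n).sub_const _).div_const _
    have hsv : Real.sqrt v ^ 2 = v := Real.sq_sqrt hvpos.le
    have hint1 : ∫ x, g x ∂π = 0 := by
      have hnum : ∫ x, (f n x - m n) ∂π = 0 := by
        rw [integral_sub (hfint n) (integrable_const _), integral_const]
        simp only [measure_univ, probReal_univ, ENNReal.toReal_one, one_smul]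
        rw [← hm_def n, sub_self]
      calc ∫ x, g x ∂π = (∫ x, (f n x - m n) ∂π) / Real.sqrt v := by
            rw [hg_def]; exact integral_div _ _
        _ = 0 := by rw [hnum, zero_div]
    have hexp : ∫ x, (f n x - m n)^2 ∂π = v := by
      have i1 : Integrable (fun x => (f n x)^2 - (2*m n) * f n x) π :=
        (hf2int n).sub ((hfint n).const_mul _)
      calc ∫ x, (f n x - m n)^2 ∂π
          = ∫ x, ((f n x)^2 - (2*m n) * f n x + (m n)^2) ∂π := by
            congr 1; ext x; ring
        _ = (∫ x, ((f n x)^2 - (2*m n) * f n x) ∂π) + ∫ _, (m n)^2 ∂π :=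
            integral_add i1 (integrable_const _)
        _ = (∫ x, (f n x)^2 ∂π) - (2*m n) * ∫ x, f n x ∂π + (m n)^2 := by
            rw [integral_sub (hf2int n) ((hfint n).const_mul _), integral_const_mul,
              integral_const]
            simp only [measure_univ, probReal_univ, ENNReal.toReal_one, one_smul, smul_eq_mul, one_mul]
        _ = v := by rw [← ha_def n, ← hm_def n, hv_def]; ring
    have hint2 : ∫ x, (g x)^2 ∂π = 1 := by
      have hgx : ∀ x, (g x)^2 = (f n x - m n)^2 * v⁻¹ := by
        intro x
        rw [hg_def]; dsimp only
        rw [div_pow, hsv, div_eq_mul_inv]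
      calc ∫ x, (g x)^2 ∂π = ∫ x, (f n x - m n)^2 * v⁻¹ ∂π := by
            congr 1; ext x; exact hgx x
        _ = (∫ x, (f n x - m n)^2 ∂π) * v⁻¹ := integral_mul_const _ _
        _ = v * v⁻¹ := by rw [hexp]
        _ = 1 := mul_inv_cancel₀ hvpos.ne'
    have hle := hlam g hgm hint1 hint2
    have hpt : ∀ pp : E × E, ENNReal.ofReal ((g pp.1 - g pp.2)^2)
        = ENNReal.ofReal v⁻¹ * ENNReal.ofReal ((f n pp.1 - f n pp.2)^2) := by
      intro pp
      rw [← ENNReal.ofReal_mul (inv_nonneg.2 hvpos.le)]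
      congr 1
      rw [hg_def]; dsimp only
      have hsub : (f n pp.1 - m n) / Real.sqrt v - (f n pp.2 - m n) / Real.sqrt v
          = (f n pp.1 - f n pp.2) / Real.sqrt v := by ring
      rw [hsub, div_pow, hsv, div_eq_mul_inv, mul_comm]
    have hDg : (1 / 2 : ℝ≥0∞) * ∫⁻ pp, ENNReal.ofReal ((g pp.1 - g pp.2)^2) ∂(π.compProd q)
        ≤ ENNReal.ofReal (v⁻¹ * (c * a n)) := by
      calc (1 / 2 : ℝ≥0∞) * ∫⁻ pp, ENNReal.ofReal ((g pp.1 - g pp.2)^2) ∂(π.compProd q)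
          = (1 / 2 : ℝ≥0∞) * (ENNReal.ofReal v⁻¹ *
              ∫⁻ pp, ENNReal.ofReal ((f n pp.1 - f n pp.2)^2) ∂(π.compProd q)) := by
            congr 1
            simp_rw [hpt]
            rw [lintegral_const_mul _ (hFmeas n)]
        _ = ENNReal.ofReal v⁻¹ * ((1 / 2 : ℝ≥0∞) *
              ∫⁻ pp, ENNReal.ofReal ((f n pp.1 - f n pp.2)^2) ∂(π.compProd q)) := by ring
        _ ≤ ENNReal.ofReal v⁻¹ * ENNReal.ofReal (c * a n) := mul_le_mul_right (hD n) _
        _ = ENNReal.ofReal (v⁻¹ * (c * a n)) :=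
            (ENNReal.ofReal_mul (inv_nonneg.2 hvpos.le)).symm
    have hfin : ENNReal.ofReal lam0 ≤ ENNReal.ofReal (v⁻¹ * (c * a n)) :=
      hlam0le.trans (hle.trans hDg)
    have hr : lam0 ≤ v⁻¹ * (c * a n) :=
      (ENNReal.ofReal_le_ofReal_iff (mul_nonneg (inv_nonneg.2 hvpos.le)
        (mul_nonneg hc.le (by linarith [ha1 n])))).1 hfin
    rw [← hv_def]
    have hcanc : (v⁻¹ * (c * a n)) * v = c * a n := by field_simp
    linarith [mul_le_mul_of_nonneg_right hr hvpos.le, hcanc.le, hcanc.ge]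
  -- tail estimate setup
  obtain ⟨β, hβ_def⟩ : ∃ β : ℝ, β = (lam0 - c) / (4 * lam0) := ⟨_, rfl⟩
  have hβ : 0 < β := hβ_def ▸ div_pos (by linarith) (by linarith)
  obtain ⟨k, hk⟩ : ∃ k : ℕ, π {x | (k:ℝ) < φ x} < ENNReal.ofReal (β/2) := by
    have hA : ∀ k : ℕ, NullMeasurableSet {x | (k:ℝ) < φ x} π :=
      fun k => (measurableSet_lt measurable_const hφ).nullMeasurableSet
    have hanti : Antitone (fun k : ℕ => {x | (k:ℝ) < φ x}) := by
      intro i j hij x hx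
      simp only [mem_setOf_eq] at hx ⊢
      exact lt_of_le_of_lt (Nat.cast_le.2 hij) hx
    have hempty : ⋂ k : ℕ, {x | (k:ℝ) < φ x} = (∅ : Set E) := by
      ext x
      simp only [mem_iInter, mem_setOf_eq, mem_empty_iff_false, iff_false, not_forall, not_lt]
      obtain ⟨n, hn⟩ := exists_nat_ge (φ x)
      exact ⟨n, hn⟩
    have htend := tendsto_measure_iInter_atTop hA hanti ⟨0, measure_ne_top π _⟩
    rw [hempty] at htend
    simp only [measure_empty] at htend
    have h0 : (0:ℝ≥0∞) < ENNReal.ofReal (β/2) := ENNReal.ofReal_pos.2 (by linarith)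
    exact (htend.eventually_lt_const h0).exists
  obtain ⟨p, hp_def⟩ : ∃ p : ℝ, p = (π {x | (k:ℝ) < φ x}).toReal := ⟨_, rfl⟩
  have hp : p ≤ β/2 := hp_def ▸ ENNReal.toReal_le_of_le_ofReal (by linarith) hk.le
  have hp0 : 0 ≤ p := hp_def ▸ ENNReal.toReal_nonneg
  obtain ⟨b, hb_def⟩ : ∃ b : ℝ, b = p + β/2 := ⟨_, rfl⟩
  have hbpos : 0 < b := by rw [hb_def]; linarith
  have hbβ : b ≤ β := by rw [hb_def, hβ_def]; rw [hβ_def] at hp; linarith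
  -- bound on m n
  have hmb : ∀ n, m n ≤ Real.exp (ε*k/2) + Real.sqrt (a n * b) := by
    intro n
    have han : (0:ℝ) < a n := lt_of_lt_of_le zero_lt_one (ha1 n)
    obtain ⟨s, hs_def⟩ : ∃ s : ℝ, s = Real.sqrt (b / a n) := ⟨_, rfl⟩
    have hspos : 0 < s := hs_def ▸ Real.sqrt_pos.2 (div_pos hbpos han)
    have hptw : ∀ x, f n x ≤ Real.exp (ε*k/2) +
        (s * (f n x)^2 + s⁻¹ * ({x | (k:ℝ) < φ x}).indicator (fun _ => (1:ℝ)) x)/2 := by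
      intro x
      by_cases hx : x ∈ {x | (k:ℝ) < φ x}
      · rw [indicator_of_mem hx]
        have h1 := sq_nonneg (Real.sqrt s * f n x - (Real.sqrt s)⁻¹)
        have h2 : Real.sqrt s ^ 2 = s := Real.sq_sqrt hspos.le
        have h3 : Real.sqrt s * (Real.sqrt s)⁻¹ = 1 :=
          mul_inv_cancel₀ (Real.sqrt_pos.2 hspos).ne'
        have h4 : ((Real.sqrt s)⁻¹)^2 = s⁻¹ := by
          rw [← Real.sqrt_inv]
          exact Real.sq_sqrt (inv_nonneg.2 hspos.le)
        have expand : (Real.sqrt s * f n x - (Real.sqrt s)⁻¹)^2 =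
            Real.sqrt s^2 * (f n x)^2 - 2*(Real.sqrt s * (Real.sqrt s)⁻¹)*f n x +
            ((Real.sqrt s)⁻¹)^2 := by ring
        rw [h2, h3, h4] at expand
        rw [expand] at h1
        linarith [Real.exp_pos (ε*k/2)]
      · rw [indicator_of_notMem hx]
        have hxk : φ x ≤ k := not_lt.1 hx
        have h1 : f n x ≤ Real.exp (ε*k/2) := by
          apply Real.exp_le_exp.2
          have h5 : min (φ x) n ≤ (k:ℝ) := le_trans (min_le_left _ _) hxk
          have h6 := mul_le_mul_of_nonneg_left h5 hε.le
          linarith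
        nlinarith [sq_nonneg (f n x), mul_nonneg hspos.le (sq_nonneg (f n x))]
    have hmeask : MeasurableSet {x | (k:ℝ) < φ x} := measurableSet_lt measurable_const hφ
    have hint_ind : Integrable (({x | (k:ℝ) < φ x}).indicator (fun _ => (1:ℝ))) π :=
      (integrable_const 1).indicator hmeask
    have hsum_int : Integrable (fun x => s * (f n x)^2 +
        s⁻¹ * ({x | (k:ℝ) < φ x}).indicator (fun _ => (1:ℝ)) x) π :=
      ((hf2int n).const_mul s).add (hint_ind.const_mul s⁻¹)
    have hrhs_int : Integrable (fun x => Real.exp (ε*k/2) +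
        (s * (f n x)^2 + s⁻¹ * ({x | (k:ℝ) < φ x}).indicator (fun _ => (1:ℝ)) x)/2) π :=
      (integrable_const _).add (hsum_int.div_const 2)
    have hmon := integral_mono (hfint n) hrhs_int hptw
    have hcomp : ∫ x, (Real.exp (ε*k/2) +
        (s * (f n x)^2 + s⁻¹ * ({x | (k:ℝ) < φ x}).indicator (fun _ => (1:ℝ)) x)/2) ∂π
        = Real.exp (ε*k/2) + (s * a n + s⁻¹ * p)/2 := by
      rw [integral_add (integrable_const _) (hsum_int.div_const 2), integral_const]
      simp only [measure_univ, probReal_univ, ENNReal.toReal_one, one_smul]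
      congr 1
      rw [integral_div]
      congr 1
      rw [integral_add ((hf2int n).const_mul s) (hint_ind.const_mul s⁻¹),
        integral_const_mul, integral_const_mul, ← ha_def n, integral_indicator_const _ hmeask]
      simp only [measure_univ, smul_eq_mul, mul_one]
      rw [hp_def]; rfl
    have hfinal : s * a n + s⁻¹ * p ≤ 2 * Real.sqrt (a n * b) := by
      have e1 : s * a n = Real.sqrt b * Real.sqrt (a n) := by
        rw [hs_def, Real.sqrt_div hbpos.le, div_mul_eq_mul_div, mul_div_assoc, Real.div_sqrt]
      have e2 : s⁻¹ = Real.sqrt (a n) / Real.sqrt b := by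
        rw [hs_def, ← Real.sqrt_inv, inv_div, Real.sqrt_div han.le]
      have e3 : s⁻¹ * p ≤ s⁻¹ * b :=
        mul_le_mul_of_nonneg_left (by rw [hb_def]; linarith) (inv_nonneg.2 hspos.le)
      have e4 : s⁻¹ * b = Real.sqrt (a n) * Real.sqrt b := by
        rw [e2, div_mul_eq_mul_div, mul_div_assoc, Real.div_sqrt]
      have e5 : Real.sqrt (a n) * Real.sqrt b = Real.sqrt (a n * b) :=
        (Real.sqrt_mul han.le b).symm
      nlinarith [Real.sqrt_nonneg (a n * b)]
    rw [hm_def n]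
    calc ∫ x, f n x ∂π ≤ Real.exp (ε*k/2) + (s * a n + s⁻¹ * p)/2 := by
          rw [← hcomp]; exact hmon
      _ ≤ Real.exp (ε*k/2) + Real.sqrt (a n * b) := by linarith
  -- uniform bound on a n
  obtain ⟨M, hM_def⟩ : ∃ M : ℝ, M = 4*lam0*Real.exp (ε*k) / (lam0 - c) := ⟨_, rfl⟩
  have habound : ∀ n, a n ≤ M := by
    intro n
    have h1 := hvar n
    have h2 := hmb n
    have h3 : (m n)^2 ≤ 2 * Real.exp (ε*k) + 2 * (a n * b) := by
      have hs : Real.sqrt (a n * b) ^ 2 = a n * b := Real.sq_sqrt (by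
        have := ha1 n; nlinarith)
      have he : Real.exp (ε*k/2) ^ 2 = Real.exp (ε*k) := by
        rw [sq, ← Real.exp_add]; ring_nf
      nlinarith [hm0 n, Real.sqrt_nonneg (a n * b), Real.exp_pos (ε*k/2),
        sq_nonneg (Real.exp (ε*k/2) - Real.sqrt (a n * b)), mul_self_le_mul_self (hm0 n) h2]
    have h4 : 2 * lam0 * b ≤ (lam0 - c) / 2 := by
      have : b ≤ (lam0 - c)/(4*lam0) := hβ_def ▸ hbβ
      rw [le_div_iff₀ (by linarith : (0:ℝ) < 2)]
      calc 2 * lam0 * b * 2 = 4 * lam0 * b := by ring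
        _ ≤ 4 * lam0 * ((lam0 - c)/(4*lam0)) := by
            apply mul_le_mul_of_nonneg_left this (by linarith)
        _ = lam0 - c := by field_simp
    have h5 : (lam0 - c)/2 * a n ≤ 2 * lam0 * Real.exp (ε*k) := by
      have e1 : lam0 * (m n ^ 2) ≤ lam0 * (2 * Real.exp (ε*k) + 2 * (a n * b)) :=
        mul_le_mul_of_nonneg_left h3 hlam0pos.le
      have e2 : (2 * lam0 * b) * a n ≤ ((lam0 - c)/2) * a n :=
        mul_le_mul_of_nonneg_right h4 (by linarith [ha1 n])
      nlinarith [ha1 n, Real.exp_pos (ε*k)]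
    rw [hM_def, le_div_iff₀ (by linarith : (0:ℝ) < lam0 - c)]
    nlinarith
  -- monotone convergence
  constructor
  · exact ((hφ.const_mul ε).exp).aestronglyMeasurable
  rw [hasFiniteIntegral_iff_ofReal (Filter.Eventually.of_forall fun x => (Real.exp_nonneg _))]
  have hsq : ∀ n x, (f n x)^2 = Real.exp (ε * min (φ x) n) := by
    intro n x
    rw [hf_def]; dsimp only; rw [sq, ← Real.exp_add]; ring_nf
  have hkey : ∀ x, (⨆ n : ℕ, ENNReal.ofReal ((f n x)^2)) = ENNReal.ofReal (Real.exp (ε * φ x)) := by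
    intro x
    apply le_antisymm
    · apply iSup_le
      intro n
      rw [hsq]
      exact ENNReal.ofReal_le_ofReal (Real.exp_le_exp.2
        (mul_le_mul_of_nonneg_left (min_le_left _ _) hε.le))
    · obtain ⟨n, hn⟩ := exists_nat_ge (φ x)
      have : (f n x)^2 = Real.exp (ε * φ x) := by
        rw [hsq, min_eq_left hn]
      exact le_iSup_of_le n (le_of_eq (by rw [this]))
  have hmono : Monotone (fun n : ℕ => fun x => ENNReal.ofReal ((f n x)^2)) := by
    intro n l hnl
    intro x
    simp only
    rw [hsq, hsq]
    apply ENNReal.ofReal_le_ofReal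
    apply Real.exp_le_exp.2
    apply mul_le_mul_of_nonneg_left _ hε.le
    exact min_le_min le_rfl (Nat.cast_le.2 hnl)
  calc ∫⁻ x, ENNReal.ofReal (Real.exp (ε * φ x)) ∂π
      = ∫⁻ x, ⨆ n : ℕ, ENNReal.ofReal ((f n x)^2) ∂π := by
        congr 1; ext x; rw [hkey]
    _ = ⨆ n : ℕ, ∫⁻ x, ENNReal.ofReal ((f n x)^2) ∂π :=
        lintegral_iSup (fun n => ((hfm n).pow_const 2).ennreal_ofReal) hmono
    _ = ⨆ n : ℕ, ENNReal.ofReal (a n) := by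
        congr 1; ext n
        rw [ha_def n, ← ofReal_integral_eq_lintegral_ofReal (hf2int n)
          (Filter.Eventually.of_forall fun x => by positivity)]
    _ ≤ ENNReal.ofReal M := iSup_le fun n => ENNReal.ofReal_le_ofReal (habound n)
    _ < ⊤ := ofReal_lt_top


/-- Theorem 1.5 (jump process form): if `J(dx,dy) = π(dx)q(x,dy)` is symmetric
and `φ ≥ 0` satisfies `∫ |φ(x) − φ(y)|² q(x,dy) ≤ δ₂'` π-a.e. with `δ₂' > 0`,
then `λ₁ ≤ (δ₂'/4)·sup{ε² : ε ≥ 0, π(e^{εφ}) < ∞}`; in particular `λ₁ = 0`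
whenever `e^{εφ}` is not integrable for any `ε > 0`. -/
theorem stmt15 {E : Type*} [MeasurableSpace E] (π : Measure E) [IsProbabilityMeasure π]
    (q : Kernel E E) [IsSFiniteKernel q]
    (hsym : Measure.map Prod.swap (π.compProd q) = π.compProd q)
    (φ : E → ℝ) (hφ : Measurable φ) (hφnn : ∀ x, 0 ≤ φ x)
    (δ : ℝ) (hδpos : 0 < δ)
    (hδ : ∀ᵐ x ∂π, (∫⁻ y, ENNReal.ofReal ((φ x - φ y) ^ 2) ∂(q x)) ≤ ENNReal.ofReal δ)
    (lam1 : ℝ≥0∞)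
    (hlam1 : lam1 = sInf {r | ∃ f : E → ℝ, Measurable f ∧ (∫ x, f x ∂π) = 0 ∧
        (∫ x, (f x) ^ 2 ∂π) = 1 ∧
        r = (1 / 2 : ℝ≥0∞) *
          ∫⁻ p, ENNReal.ofReal ((f p.1 - f p.2) ^ 2) ∂(π.compProd q)}) :
    lam1 ≤ ENNReal.ofReal (δ / 4) *
        sSup {x : ℝ≥0∞ | ∃ ε : ℝ, 0 ≤ ε ∧
          Integrable (fun y => Real.exp (ε * φ y)) π ∧ x = ENNReal.ofReal (ε ^ 2)} ∧
    ((∀ ε : ℝ, 0 < ε → ¬ Integrable (fun y => Real.exp (ε * φ y)) π) → lam1 = 0) := by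
  have hlam : ∀ g : E → ℝ, Measurable g → (∫ x, g x ∂π) = 0 → (∫ x, (g x)^2 ∂π) = 1 →
      lam1 ≤ (1 / 2 : ℝ≥0∞) * ∫⁻ p, ENNReal.ofReal ((g p.1 - g p.2) ^ 2) ∂(π.compProd q) := by
    intro g hg h0 h1
    rw [hlam1]
    exact sInf_le ⟨g, hg, h0, h1, rfl⟩
  have key := key_lemma π q hsym φ hφ hφnn δ hδpos hδ lam1 hlam
  set T : Set ℝ≥0∞ := {x : ℝ≥0∞ | ∃ ε : ℝ, 0 ≤ ε ∧
      Integrable (fun y => Real.exp (ε * φ y)) π ∧ x = ENNReal.ofReal (ε ^ 2)} with hT_def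
  have hc0 : (ENNReal.ofReal (δ/4)) ≠ 0 := by
    simp only [ne_eq, ENNReal.ofReal_eq_zero, not_le]
    linarith
  have main : lam1 ≤ ENNReal.ofReal (δ / 4) * sSup T := by
    by_contra hcon
    push_neg at hcon
    by_cases hStop : sSup T = ⊤
    · rw [hStop, ENNReal.mul_top hc0] at hcon
      exact absurd hcon not_top_lt
    have hS' : sSup T < lam1 / ENNReal.ofReal (δ/4) := by
      rw [ENNReal.lt_div_iff_mul_lt (Or.inl hc0) (Or.inl ofReal_ne_top)]
      rw [mul_comm]
      exact hcon
    obtain ⟨u, hu1, hu2⟩ := exists_between hS'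
    have hufin : u ≠ ⊤ := by
      intro h
      rw [h] at hu2
      exact absurd hu2 not_top_lt
    have hε2 : ENNReal.ofReal ((Real.sqrt u.toReal)^2) = u := by
      rw [Real.sq_sqrt ENNReal.toReal_nonneg, ENNReal.ofReal_toReal hufin]
    have hlt : ENNReal.ofReal (δ/4) * ENNReal.ofReal ((Real.sqrt u.toReal)^2) < lam1 := by
      rw [hε2]
      exact ENNReal.mul_lt_of_lt_div' hu2
    have hint := key (Real.sqrt u.toReal) (Real.sqrt_nonneg _) hlt
    have hmem : u ∈ T := ⟨Real.sqrt u.toReal, Real.sqrt_nonneg _, hint, hε2.symm⟩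
    exact absurd hu1 (not_lt.2 (le_sSup hmem))
  refine ⟨main, fun h => ?_⟩
  have hset : T = {0} := by
    ext x
    constructor
    · rintro ⟨ε, hε0, hint, rfl⟩
      rcases hε0.lt_or_eq with hε | hε
      · exact absurd hint (h ε hε)
      · simp [← hε]
    · rintro rfl
      refine ⟨0, le_rfl, ?_, by simp⟩
      simpa using (integrable_const (1:ℝ))
  have hS0 : sSup T = 0 := by rw [hset, sSup_singleton]
  rw [hS0, mul_zero] at main
  exact le_antisymm main (by simp)
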